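/- Let d ≥ 1 be an integer, R > 0, and let K : [0,∞) → ℝ be a bounded, nonnegative, measurable function supported in [0,R]. For j ≥ 1 set m_{K,j} := ∫₀^R s^{j−1} K(s) ds and assume m_{K,d} > 0; define the kernel moment ratios B_p := m_{K,d+p}/m_{K,d}. Set c₁ᵈ = 2d, c₂ᵈ = 8d², c₃ᵈ = 4d(d−1), and c₅ᵈ = c₂ᵈ − 2√2 c₃ᵈ − 8 c₁ᵈ. Let F : [0,∞) → ℝ be continuous with F(t) = τ₁ t + τ₂ t² + τ₃ t³ + o(t³) as t → 0⁺, define I_F(h) := (∫₀^R u^{d−1} K(u) F(hu) du)/m_{K,d}, Ψ_F(h) := c₂ᵈ I_F(h) − c₃ᵈ I_F(√2 h) − c₁ᵈ I_F(2h), and φ₂(a) := c₂ᵈ F(a) − c₃ᵈ F(√2 a) − c₁ᵈ F(2a). Then, as h → 0⁺, Ψ_F(h) − φ₂(B₁ h) = c₅ᵈ τ₃ (B₃ − B₁³) h³ + o(h³). -/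

import Mathlib

open MeasureTheory Filter Topology Asymptotics

private lemma aux_intInt (d : ℕ) (R M : ℝ) (hR : 0 < R)
    (K : ℝ → ℝ) (hKmeas : Measurable K) (hKnn : ∀ s, 0 ≤ K s) (hM : ∀ s, K s ≤ M)
    (ψ : ℝ → ℝ) (hψ : ContinuousOn ψ (Set.Icc 0 R)) :
    IntervalIntegrable (fun u => u ^ (d-1) * K u * ψ u) volume 0 R := by
  obtain ⟨C, hC⟩ := isCompact_Icc.exists_bound_of_continuousOn hψ
  rw [intervalIntegrable_iff, Set.uIoc_of_le hR.le]
  refine ⟨?_, ?_⟩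
  · exact (((measurable_id.pow_const (d-1)).mul hKmeas).aestronglyMeasurable.restrict.mul
      ((hψ.aestronglyMeasurable measurableSet_Icc).mono_measure
        (Measure.restrict_mono Set.Ioc_subset_Icc_self le_rfl)))
  · apply HasFiniteIntegral.restrict_of_bounded (C := (max R 1)^(d-1) * max M 0 * C)
      measure_Ioc_lt_top
    filter_upwards [ae_restrict_mem measurableSet_Ioc] with u hu
    have h1 : ‖u ^ (d-1) * K u‖ ≤ (max R 1)^(d-1) * max M 0 := by
      rw [Real.norm_eq_abs, abs_of_nonneg (mul_nonneg (pow_nonneg hu.1.le _) (hKnn u))]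
      exact mul_le_mul (pow_le_pow_left₀ hu.1.le (hu.2.trans (le_max_left R 1)) _)
        ((hM u).trans (le_max_left M 0)) (hKnn u) (by positivity)
    calc ‖u ^ (d-1) * K u * ψ u‖ = ‖u ^ (d-1) * K u‖ * ‖ψ u‖ := norm_mul _ _
      _ ≤ (max R 1)^(d-1) * max M 0 * C :=
        mul_le_mul h1 (hC u ⟨hu.1.le, hu.2⟩) (norm_nonneg _) (by positivity)

theorem stmt_14 (d : ℕ) (hd : 1 ≤ d) (R : ℝ) (hR : 0 < R)
    (K : ℝ → ℝ) (hKmeas : Measurable K) (hKnonneg : ∀ s, 0 ≤ K s)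
    (hKbdd : ∃ M, ∀ s, K s ≤ M)
    (hKsupp : ∀ s, R < s → K s = 0)
    (mK : ℕ → ℝ) (hmK : ∀ j, mK j = ∫ s in (0:ℝ)..R, s ^ (j - 1) * K s)
    (hmKd : 0 < mK d)
    (B : ℕ → ℝ) (hB : ∀ p, B p = mK (d + p) / mK d)
    (c1 c2 c3 c5 : ℝ) (hc1 : c1 = 2 * (d : ℝ)) (hc2 : c2 = 8 * (d : ℝ) ^ 2)
    (hc3 : c3 = 4 * (d : ℝ) * ((d : ℝ) - 1))
    (hc5 : c5 = c2 - 2 * Real.sqrt 2 * c3 - 8 * c1)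
    (F : ℝ → ℝ) (hFcont : ContinuousOn F (Set.Ici 0))
    (τ₁ τ₂ τ₃ : ℝ)
    (hF : (fun t => F t - (τ₁ * t + τ₂ * t ^ 2 + τ₃ * t ^ 3))
      =o[𝓝[>] (0:ℝ)] fun t => t ^ 3)
    (IF : ℝ → ℝ)
    (hIF : ∀ h, IF h = (∫ u in (0:ℝ)..R, u ^ (d - 1) * K u * F (h * u)) / mK d)
    (Ψ : ℝ → ℝ)
    (hΨ : ∀ h, Ψ h = c2 * IF h - c3 * IF (Real.sqrt 2 * h) - c1 * IF (2 * h))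
    (φ₂ : ℝ → ℝ)
    (hφ₂ : ∀ a, φ₂ a = c2 * F a - c3 * F (Real.sqrt 2 * a) - c1 * F (2 * a)) :
    (fun h => Ψ h - φ₂ (B 1 * h) - c5 * τ₃ * (B 3 - (B 1) ^ 3) * h ^ 3)
      =o[𝓝[>] (0:ℝ)] fun h => h ^ 3 := by
  obtain ⟨M, hM⟩ := hKbdd
  set E : ℝ → ℝ := fun t => F t - (τ₁ * t + τ₂ * t ^ 2 + τ₃ * t ^ 3) with hEdef
  have hs2 : Real.sqrt 2 ^ 2 = 2 := Real.sq_sqrt (by norm_num)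
  have hs0 : (0:ℝ) < Real.sqrt 2 := Real.sqrt_pos.mpr (by norm_num)
  -- moments
  have hmom : ∀ p : ℕ, (∫ u in (0:ℝ)..R, u ^ (d-1) * K u * u ^ p) = mK (d + p) := by
    intro p
    rw [hmK (d + p)]
    apply intervalIntegral.integral_congr
    intro u _
    show u ^ (d-1) * K u * u ^ p = u ^ (d + p - 1) * K u
    have e : d - 1 + p = d + p - 1 := by omega
    rw [mul_right_comm, ← pow_add, e]
  have hmKnn : ∀ j, 0 ≤ mK j := by
    intro j
    rw [hmK]
    exact intervalIntegral.integral_nonneg hR.le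
      (fun u hu => mul_nonneg (pow_nonneg hu.1 _) (hKnonneg u))
  -- integrability
  have hInt : ∀ ψ : ℝ → ℝ, ContinuousOn ψ (Set.Icc 0 R) →
      IntervalIntegrable (fun u => u ^ (d-1) * K u * ψ u) volume 0 R :=
    fun ψ hψ => aux_intInt d R M hR K hKmeas hKnonneg hM ψ hψ
  have hFc : ∀ a : ℝ, 0 ≤ a → ContinuousOn (fun u => F (a * u)) (Set.Icc 0 R) := by
    intro a ha
    exact hFcont.comp (Continuous.continuousOn (by fun_prop))
      (fun u hu => mul_nonneg ha hu.1)
  have hEc : ∀ a : ℝ, 0 ≤ a → ContinuousOn (fun u => E (a * u)) (Set.Icc 0 R) := by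
    intro a ha
    simp only [hEdef]
    exact (hFc a ha).sub (Continuous.continuousOn (by fun_prop))
  -- decomposition of the integral
  have hIFdec : ∀ a : ℝ, 0 ≤ a →
      (∫ u in (0:ℝ)..R, u ^ (d-1) * K u * F (a * u))
        = τ₁ * a * mK (d+1) + τ₂ * a^2 * mK (d+2) + τ₃ * a^3 * mK (d+3)
          + ∫ u in (0:ℝ)..R, u ^ (d-1) * K u * E (a * u) := by
    intro a ha
    have I1 := (hInt (fun u => u ^ 1) (by fun_prop)).const_mul (τ₁ * a)
    have I2 := (hInt (fun u => u ^ 2) (by fun_prop)).const_mul (τ₂ * a^2)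
    have I3 := (hInt (fun u => u ^ 3) (by fun_prop)).const_mul (τ₃ * a^3)
    have IE := hInt (fun u => E (a * u)) (hEc a ha)
    have key : Set.EqOn (fun u => u ^ (d-1) * K u * F (a * u))
        (fun u => τ₁ * a * (u ^ (d-1) * K u * u ^ 1) + τ₂ * a^2 * (u ^ (d-1) * K u * u ^ 2)
          + τ₃ * a^3 * (u ^ (d-1) * K u * u ^ 3) + u ^ (d-1) * K u * E (a * u))
        (Set.uIcc 0 R) := by
      intro u _
      simp only [hEdef]
      ring
    rw [intervalIntegral.integral_congr key,
      intervalIntegral.integral_add ((I1.add I2).add I3) IE,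
      intervalIntegral.integral_add (I1.add I2) I3,
      intervalIntegral.integral_add I1 I2,
      intervalIntegral.integral_const_mul, intervalIntegral.integral_const_mul,
      intervalIntegral.integral_const_mul, hmom 1, hmom 2, hmom 3]
  have hIFB : ∀ a : ℝ, 0 ≤ a →
      (∫ u in (0:ℝ)..R, u ^ (d-1) * K u * F (a * u)) / mK d
        = τ₁ * B 1 * a + τ₂ * B 2 * a^2 + τ₃ * B 3 * a^3
          + (∫ u in (0:ℝ)..R, u ^ (d-1) * K u * E (a * u)) / mK d := by
    intro a ha
    rw [hIFdec a ha, hB 1, hB 2, hB 3]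
    field_simp
  -- F 0 = 0 (hence E 0 = 0)
  have hE0 : E 0 = 0 := by
    have ht3 : Tendsto (fun t : ℝ => t ^ 3) (𝓝[>] (0:ℝ)) (𝓝 0) := by
      simpa using ((continuous_pow 3).tendsto (0:ℝ)).mono_left nhdsWithin_le_nhds
    have hEto : Tendsto E (𝓝[>] (0:ℝ)) (𝓝 0) := hF.isBigO.trans_tendsto ht3
    have hpoly : Tendsto (fun t : ℝ => τ₁ * t + τ₂ * t ^ 2 + τ₃ * t ^ 3)
        (𝓝[>] (0:ℝ)) (𝓝 0) := by
      have hc : Continuous fun t : ℝ => τ₁ * t + τ₂ * t ^ 2 + τ₃ * t ^ 3 := by fun_prop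
      simpa using (hc.tendsto 0).mono_left nhdsWithin_le_nhds
    have hFto : Tendsto F (𝓝[>] (0:ℝ)) (𝓝 0) := by
      have h2 := hEto.add hpoly
      simp only [add_zero] at h2
      refine h2.congr (fun t => ?_)
      simp [hEdef]
    have hF0 : Tendsto F (𝓝[>] (0:ℝ)) (𝓝 (F 0)) :=
      ((hFcont 0 (le_refl (0:ℝ))).tendsto).mono_left
        (nhdsWithin_mono 0 Set.Ioi_subset_Ici_self)
    have hF00 : F 0 = 0 := tendsto_nhds_unique hF0 hFto
    simp [hEdef, hF00]
  -- composition little-o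
  have hEcomp : ∀ c : ℝ, 0 ≤ c →
      (fun h => E (c * h)) =o[𝓝[>] (0:ℝ)] fun h => h ^ 3 := by
    intro c hc
    rcases hc.eq_or_lt with h0 | hcpos
    · simpa [← h0, hE0] using
        (isLittleO_zero (fun h : ℝ => h ^ 3) (𝓝[>] (0:ℝ)) (E' := ℝ))
    · have h1 : Tendsto (fun h : ℝ => c * h) (𝓝[>] (0:ℝ)) (𝓝 0) := by
        simpa using ((continuous_mul_left c).tendsto (0:ℝ)).mono_left
          (nhdsWithin_le_nhds (s := Set.Ioi (0:ℝ)))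
      have hmap : Tendsto (fun h : ℝ => c * h) (𝓝[>] (0:ℝ)) (𝓝[>] (0:ℝ)) := by
        apply tendsto_nhdsWithin_of_tendsto_nhds_of_eventually_within _ h1
        filter_upwards [self_mem_nhdsWithin] with x hx
        exact mul_pos hcpos hx
      refine (hF.comp_tendsto hmap).trans_isBigO ?_
      calc (fun h : ℝ => ((fun t => t ^ 3) ∘ fun h => c * h) h)
          = fun h : ℝ => c ^ 3 * h ^ 3 := by funext h; simp [Function.comp]; ring
        _ =O[𝓝[>] (0:ℝ)] fun h => h ^ 3 := isBigO_const_mul_self _ _ _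
  -- the integral remainder is o(h^3)
  have hJ : ∀ c : ℝ, 0 < c →
      (fun h => ∫ u in (0:ℝ)..R, u ^ (d-1) * K u * E (c * h * u))
        =o[𝓝[>] (0:ℝ)] fun h => h ^ 3 := by
    intro c hc
    rw [isLittleO_iff]
    intro ε hε
    have hm3 : (0:ℝ) < mK (d+3) + 1 := by have := hmKnn (d+3); linarith
    have hden : (0:ℝ) < c ^ 3 * (mK (d+3) + 1) := by positivity
    set ε' := ε / (c ^ 3 * (mK (d+3) + 1)) with hε'def
    have hε' : 0 < ε' := div_pos hε hden
    obtain ⟨δ, hδpos, hδ⟩ := mem_nhdsGT_iff_exists_Ioo_subset.mp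
      (isLittleO_iff.mp hF hε')
    have hδR : (0:ℝ) < δ / (c * R) := div_pos hδpos (mul_pos hc hR)
    filter_upwards [Ioo_mem_nhdsGT hδR] with h hh
    obtain ⟨hh0, hh1⟩ := hh
    have hbd : ∀ᵐ u ∂(volume.restrict (Set.uIoc (0:ℝ) R)),
        ‖u ^ (d-1) * K u * E (c * h * u)‖
          ≤ ε' * (c * h) ^ 3 * (u ^ (d-1) * K u * u ^ 3) := by
      rw [Set.uIoc_of_le hR.le]
      filter_upwards [ae_restrict_mem measurableSet_Ioc] with u hu
      have ht0 : 0 < c * h * u := mul_pos (mul_pos hc hh0) hu.1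
      have htδ : c * h * u < δ := by
        have h1 : c * h * u ≤ c * h * R :=
          mul_le_mul_of_nonneg_left hu.2 (mul_pos hc hh0).le
        have h2 : h * (c * R) < δ := (lt_div_iff₀ (mul_pos hc hR)).mp hh1
        nlinarith
      have hEb : ‖E (c * h * u)‖ ≤ ε' * ‖(c * h * u) ^ 3‖ := hδ ⟨ht0, htδ⟩
      have hgnn : 0 ≤ u ^ (d-1) * K u := mul_nonneg (pow_nonneg hu.1.le _) (hKnonneg u)
      calc ‖u ^ (d-1) * K u * E (c * h * u)‖
          = (u ^ (d-1) * K u) * ‖E (c * h * u)‖ := by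
            rw [norm_mul, Real.norm_of_nonneg hgnn]
        _ ≤ (u ^ (d-1) * K u) * (ε' * ‖(c * h * u) ^ 3‖) :=
            mul_le_mul_of_nonneg_left hEb hgnn
        _ = ε' * (c * h) ^ 3 * (u ^ (d-1) * K u * u ^ 3) := by
            rw [Real.norm_of_nonneg (by positivity)]
            ring
    have hbint := (hInt (fun u => u ^ 3) (by fun_prop)).const_mul (ε' * (c * h) ^ 3)
    have hle := intervalIntegral.norm_integral_le_of_norm_le hR.le
      (by rw [Set.uIoc_of_le hR.le] at hbd; exact (ae_restrict_iff' measurableSet_Ioc).mp hbd) hbint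
    have hval : (∫ u in (0:ℝ)..R, ε' * (c * h) ^ 3 * (u ^ (d-1) * K u * u ^ 3))
        = ε' * (c * h) ^ 3 * mK (d + 3) := by
      rw [intervalIntegral.integral_const_mul, hmom 3]
    rw [hval] at hle
    have hkey : ε' * c ^ 3 * mK (d+3) ≤ ε := by
      rw [hε'def, div_mul_eq_mul_div, div_mul_eq_mul_div, div_le_iff₀ hden]
      nlinarith [hmKnn (d+3), hε.le, pow_pos hc 3]
    calc ‖∫ u in (0:ℝ)..R, u ^ (d-1) * K u * E (c * h * u)‖
        ≤ ε' * (c * h) ^ 3 * mK (d + 3) := hle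
      _ = (ε' * c ^ 3 * mK (d+3)) * h ^ 3 := by ring
      _ ≤ ε * h ^ 3 := mul_le_mul_of_nonneg_right hkey (by positivity)
      _ = ε * ‖h ^ 3‖ := by rw [Real.norm_of_nonneg (by positivity)]
  -- assemble
  have hB1 : (0:ℝ) ≤ B 1 := by rw [hB]; exact div_nonneg (hmKnn _) hmKd.le
  have hS2 : c2 - 2*c3 - 4*c1 = 0 := by rw [hc1, hc2, hc3]; ring
  have hΦ : (fun h => (c2 * (∫ u in (0:ℝ)..R, u ^ (d-1) * K u * E (h * u))
        - c3 * (∫ u in (0:ℝ)..R, u ^ (d-1) * K u * E (Real.sqrt 2 * h * u))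
        - c1 * (∫ u in (0:ℝ)..R, u ^ (d-1) * K u * E (2 * h * u))) / mK d
      - (c2 * E (B 1 * h) - c3 * E (Real.sqrt 2 * B 1 * h) - c1 * E (2 * B 1 * h)))
      =o[𝓝[>] (0:ℝ)] fun h => h ^ 3 := by
    have h1 := hJ 1 one_pos
    simp only [one_mul] at h1
    have h2 := hJ (Real.sqrt 2) hs0
    have h3 := hJ 2 two_pos
    have e1 := hEcomp (B 1) hB1
    have e2 := hEcomp (Real.sqrt 2 * B 1) (by positivity)
    have e3 := hEcomp (2 * B 1) (by positivity)
    have big := ((((h1.const_mul_left c2).sub (h2.const_mul_left c3)).sub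
        (h3.const_mul_left c1)).const_mul_left (mK d)⁻¹).sub
      (((e1.const_mul_left c2).sub (e2.const_mul_left c3)).sub (e3.const_mul_left c1))
    exact big.congr_left fun h => by rw [← div_eq_inv_mul]
  refine hΦ.congr' ?_ EventuallyEq.rfl
  filter_upwards [self_mem_nhdsWithin] with h hh
  have hhpos : (0:ℝ) < h := hh
  have hFs : ∀ t : ℝ, F t = τ₁*t + τ₂*t^2 + τ₃*t^3 + E t := by
    intro t; simp [hEdef]
  show _ = Ψ h - φ₂ (B 1 * h) - c5 * τ₃ * (B 3 - (B 1) ^ 3) * h ^ 3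
  rw [hΨ, hφ₂, hIF h, hIF (Real.sqrt 2 * h), hIF (2 * h), hIFB h hhpos.le,
    hIFB (Real.sqrt 2 * h) (by positivity), hIFB (2 * h) (by positivity),
    show Real.sqrt 2 * (B 1 * h) = Real.sqrt 2 * B 1 * h from (mul_assoc _ _ _).symm,
    show (2:ℝ) * (B 1 * h) = 2 * B 1 * h from (mul_assoc _ _ _).symm,
    hFs (B 1 * h), hFs (Real.sqrt 2 * B 1 * h), hFs (2 * B 1 * h)]
  linear_combination (-(τ₂*h^2*(B 2-(B 1)^2))) * hS2
    + (c3*(τ₂*h^2*(B 2-(B 1)^2) + Real.sqrt 2*τ₃*h^3*(B 3-(B 1)^3))) * hs2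
    + (τ₃*h^3*(B 3-(B 1)^3)) * hc5
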